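/- (Blow-up in finite time.) For every γ > 0 there exists α_γ ≥ 1 such that for every α > α_γ the limiting dynamical system with ρ = 0 satisfies t* < ∞. More precisely, let S(γ) = sup_{j≥1} Σ_{i=0}^∞ γ_j/γ_{j+i} (a finite number), and suppose α > 1 + 2·S(γ) and (1+γ)^{⌊α⌋/2} − 1 < ((1+γ)^{⌊α⌋} − 1)/S(γ). Then, writing a = ⌊α⌋, one has Δ_1 = (1 − (α − a))·γ/γ_a, Δ_n ≤ γ/γ_{a+n−1} for all n ≥ 2, and hence t* ≤ γ·Σ_{n=0}^∞ ((1+γ)^{a+n} − 1)^{−1} < ∞. -/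

import Mathlib

namespace SelectiveSweeps

noncomputable section

/-- `γ_j = (1+γ)^j − 1` for `j ∈ ℤ`. -/
def gam (γ : ℝ) (j : ℤ) : ℝ := (1 + γ) ^ j - 1

/-- `λ_j = (1+ρ)(1+γ)^j − 1` for `j ∈ ℤ`. -/
def lam (γ ρ : ℝ) (j : ℤ) : ℝ := (1 + ρ) * (1 + γ) ^ j - 1

/-- A state of the recursion: the time `s_n` together with the values `y_j(s_n)`, `j ∈ ℕ`. -/
structure St where
  s : ℝ
  y : ℕ → ℝ

/-- `α_n = α + ρ s_n / γ`. -/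
def alphaOf (γ ρ α : ℝ) (σ : St) : ℝ := α + ρ * σ.s / γ

/-- `m_n = max {j : y_j(s_n) = α_n}`. -/
def mOf (γ ρ α : ℝ) (σ : St) : ℕ := sSup {j : ℕ | σ.y j = alphaOf γ ρ α σ}

/-- `k_n = max {j : y_j(s_n) > 0}`. -/
def kOf (σ : St) : ℕ := sSup {j : ℕ | 0 < σ.y j}

/-- `k_n^* = k_n` if `y_{k_n}(s_n) < 1`, and `k_n + 1` if `y_{k_n}(s_n) = 1`. -/
def kstarOf (σ : St) : ℕ := if σ.y (kOf σ) < 1 then kOf σ else kOf σ + 1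

/-- `δ_{n,j}`:  `(α_n − y_j(s_n))·γ/(λ_{j−m_n} − ρ)` for `m_n < j < k_n^*` and
`(1 − y_{k_n^*}(s_n))·γ/λ_{k_n^*−m_n}` for `j = k_n^*`. -/
def deltaOf (γ ρ α : ℝ) (σ : St) (j : ℕ) : ℝ :=
  if j = kstarOf σ then
    (1 - σ.y (kstarOf σ)) * γ / lam γ ρ ((kstarOf σ : ℤ) - (mOf γ ρ α σ : ℤ))
  else
    (alphaOf γ ρ α σ - σ.y j) * γ / (lam γ ρ ((j : ℤ) - (mOf γ ρ α σ : ℤ)) - ρ)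

/-- `Δ_n = min {δ_{n,j} : m_n < j ≤ k_n^*}`. -/
def DeltaOf (γ ρ α : ℝ) (σ : St) : ℝ :=
  sInf (deltaOf γ ρ α σ '' Set.Ioc (mOf γ ρ α σ) (kstarOf σ))

/-- One step of the recursion: `s_{n+1} = s_n + Δ_n` and, evaluating
`y_j(s_n + t) = max (y_j(s_n) + t·λ_{j−m_n}/γ) 0` (for `j ≤ k_n^*`; `0` for `j > k_n^*`)
at `t = Δ_n`, the new values `y_j(s_{n+1})`. -/
def step (γ ρ α : ℝ) (σ : St) : St where
  s := σ.s + DeltaOf γ ρ α σ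
  y := fun j =>
    if j ≤ kstarOf σ then
      max (σ.y j + DeltaOf γ ρ α σ * lam γ ρ ((j : ℤ) - (mOf γ ρ α σ : ℤ)) / γ) 0
    else 0

/-- The state after `n` steps: `(state γ ρ α n).s = s_n` and `(state γ ρ α n).y j = y_j(s_n)`.
Initially `s_0 = 0` and `y_j(0) = max (α − j) 0`. -/
def state (γ ρ α : ℝ) (n : ℕ) : St :=
  (step γ ρ α)^[n] ⟨0, fun j => max (α - j) 0⟩

/-- The index `n` of the interval `[s_n, s_{n+1}]` used to evaluate `y_j` at time `t`. -/
def idxAt (γ ρ α : ℝ) (t : ℝ) : ℕ := sInf {n : ℕ | t < (state γ ρ α (n + 1)).s}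

/-- `y_j(t)`, evaluated via the piecewise linear recursion: for `s_n ≤ t ≤ s_{n+1}`,
`y_j(t) = max (y_j(s_n) + (t − s_n)·λ_{j−m_n}/γ) 0` for `j ≤ k_n^*`, and `0` for `j > k_n^*`. -/
def yAt (γ ρ α : ℝ) (j : ℕ) (t : ℝ) : ℝ :=
  let σ := state γ ρ α (idxAt γ ρ α t)
  if j ≤ kstarOf σ then
    max (σ.y j + (t - σ.s) * lam γ ρ ((j : ℤ) - (mOf γ ρ α σ : ℤ)) / γ) 0
  else 0

/-- Conditions (i)–(ii) at a state: (i) the sets defining `m_n` and `k_n` are nonempty and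
bounded, `y_j(s_n) ≤ α_n` for all `j`, and `y_j(s_n) > 0` for `m_n ≤ j ≤ k_n`;
(ii) `y_{j+1}(s_n) ≥ y_j(s_n) − 1` for all `0 ≤ j ≤ k_n`. -/
def Cond (γ ρ α : ℝ) (σ : St) : Prop :=
  {j : ℕ | σ.y j = alphaOf γ ρ α σ}.Nonempty ∧
  BddAbove {j : ℕ | σ.y j = alphaOf γ ρ α σ} ∧
  {j : ℕ | 0 < σ.y j}.Nonempty ∧
  BddAbove {j : ℕ | 0 < σ.y j} ∧
  (∀ j : ℕ, σ.y j ≤ alphaOf γ ρ α σ) ∧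
  (∀ j : ℕ, mOf γ ρ α σ ≤ j → j ≤ kOf σ → 0 < σ.y j) ∧
  (∀ j : ℕ, j ≤ kOf σ → σ.y j - 1 ≤ σ.y (j + 1))

/-- `t_j = inf { t ∈ [0, t*) : y_j(t) = 1 }`, where `t < t* = Σ_n Δ_n = sup_n s_n` is
expressed as `∃ n, t < s_n`. -/
def tHit (γ ρ α : ℝ) (j : ℕ) : ℝ :=
  sInf {t : ℝ | 0 ≤ t ∧ (∃ n : ℕ, t < (state γ ρ α n).s) ∧ yAt γ ρ α j t = 1}


/-- `S(γ) = sup_{j ≥ 1} Σ_{i=0}^∞ γ_j/γ_{j+i}`. -/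
def Sg (γ : ℝ) : ℝ :=
  ⨆ j : ℕ, ∑' i : ℕ, gam γ ((j : ℤ) + 1) / gam γ ((j : ℤ) + 1 + (i : ℤ))

variable {γ α : ℝ}

lemma one_lt_base (hγ : 0 < γ) : (1:ℝ) < 1 + γ := by linarith

lemma base_pos (hγ : 0 < γ) : (0:ℝ) < 1 + γ := by linarith

lemma gam_zero : gam γ 0 = 0 := by simp [gam]

lemma gam_mono (hγ : 0 < γ) {m n : ℤ} (h : m ≤ n) : gam γ m ≤ gam γ n := by
  have := zpow_le_zpow_right₀ (one_lt_base hγ).le h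
  simp only [gam]; linarith

lemma gam_strictMono (hγ : 0 < γ) {m n : ℤ} (h : m < n) : gam γ m < gam γ n := by
  have := zpow_lt_zpow_right₀ (one_lt_base hγ) h
  simp only [gam]; linarith

lemma gam_nonneg (hγ : 0 < γ) {m : ℤ} (hm : 0 ≤ m) : 0 ≤ gam γ m := by
  have := gam_mono hγ hm; rwa [gam_zero] at this

lemma gam_pos (hγ : 0 < γ) {m : ℤ} (hm : 1 ≤ m) : 0 < gam γ m := by
  have := gam_strictMono hγ (show (0:ℤ) < m by omega); rwa [gam_zero] at this

lemma gam_mul_le (hγ : 0 < γ) (m : ℤ) (i : ℕ) :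
    gam γ m * (1 + γ) ^ (i : ℤ) ≤ gam γ (m + i) := by
  have h1 : (1:ℝ) ≤ (1 + γ) ^ (i : ℤ) := one_le_zpow₀ (one_lt_base hγ).le (by positivity)
  simp only [gam, sub_mul, one_mul, ← zpow_add₀ (base_pos hγ).ne']
  linarith

lemma ratio_le_geo (hγ : 0 < γ) {m : ℤ} (hm : 1 ≤ m) (i : ℕ) :
    gam γ m / gam γ (m + i) ≤ ((1 + γ)⁻¹) ^ i := by
  have h1 : 0 < gam γ (m + i) := gam_pos hγ (by omega)
  have h2 : (0:ℝ) < (1 + γ) ^ i := pow_pos (base_pos hγ) i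
  rw [inv_pow, inv_eq_one_div, div_le_div_iff₀ h1 h2, one_mul]
  have := gam_mul_le hγ m i
  rwa [zpow_natCast] at this

lemma summable_ratio (hγ : 0 < γ) {m : ℤ} (hm : 1 ≤ m) :
    Summable (fun i : ℕ => gam γ m / gam γ (m + i)) := by
  refine Summable.of_nonneg_of_le (fun i => div_nonneg (gam_pos hγ hm).le
    (gam_pos hγ (by omega)).le) (ratio_le_geo hγ hm) ?_
  exact summable_geometric_of_lt_one (by positivity)
    (inv_lt_one_of_one_lt₀ (one_lt_base hγ))

lemma tsum_ratio_le_geo (hγ : 0 < γ) {m : ℤ} (hm : 1 ≤ m) :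
    ∑' i : ℕ, gam γ m / gam γ (m + i) ≤ (1 - (1 + γ)⁻¹)⁻¹ := by
  have hgeo : Summable (fun i : ℕ => ((1 + γ)⁻¹) ^ i) :=
    summable_geometric_of_lt_one (by positivity) (inv_lt_one_of_one_lt₀ (one_lt_base hγ))
  calc ∑' i : ℕ, gam γ m / gam γ (m + i) ≤ ∑' i : ℕ, ((1 + γ)⁻¹) ^ i :=
        Summable.tsum_le_tsum (ratio_le_geo hγ hm) (summable_ratio hγ hm) hgeo
    _ = (1 - (1 + γ)⁻¹)⁻¹ := tsum_geometric_of_lt_one (by positivity)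
        (inv_lt_one_of_one_lt₀ (one_lt_base hγ))

lemma bddAbove_Sg (hγ : 0 < γ) :
    BddAbove (Set.range fun j : ℕ => ∑' i : ℕ, gam γ ((j : ℤ) + 1) / gam γ ((j : ℤ) + 1 + (i : ℤ))) := by
  refine ⟨(1 - (1 + γ)⁻¹)⁻¹, ?_⟩
  rintro x ⟨j, rfl⟩
  exact tsum_ratio_le_geo hγ (by omega)

lemma le_Sg (hγ : 0 < γ) {m : ℤ} (hm : 1 ≤ m) :
    ∑' i : ℕ, gam γ m / gam γ (m + i) ≤ Sg γ := by
  have h : m = ((m - 1).toNat : ℤ) + 1 := by omega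
  rw [h]
  exact le_ciSup (bddAbove_Sg hγ) (m - 1).toNat

lemma one_le_Sg (hγ : 0 < γ) : 1 ≤ Sg γ := by
  refine le_trans ?_ (le_Sg hγ (m := 1) le_rfl)
  have hs := summable_ratio hγ (m := 1) le_rfl
  have h := Summable.le_tsum hs 0 (fun j _ => div_nonneg (gam_pos hγ le_rfl).le
    (gam_pos hγ (by omega)).le)
  simpa [div_self (gam_pos hγ (le_refl 1)).ne'] using h

lemma Sg_pos (hγ : 0 < γ) : 0 < Sg γ := lt_of_lt_of_le one_pos (one_le_Sg hγ)

lemma summable_inv_gam (hγ : 0 < γ) {m : ℤ} (hm : 1 ≤ m) :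
    Summable (fun i : ℕ => (gam γ (m + i))⁻¹) := by
  have hne := (gam_pos hγ hm).ne'
  have h := (summable_ratio hγ hm).mul_left (gam γ m)⁻¹
  have he : (fun i : ℕ => (gam γ m)⁻¹ * (gam γ m / gam γ (m + i)))
      = fun i : ℕ => (gam γ (m + i))⁻¹ := by
    funext i; field_simp
  rwa [he] at h

lemma tsum_inv_gam_le (hγ : 0 < γ) {m : ℤ} (hm : 1 ≤ m) :
    ∑' i : ℕ, (gam γ (m + i))⁻¹ ≤ Sg γ / gam γ m := by
  rw [le_div_iff₀ (gam_pos hγ hm)]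
  have : (∑' i : ℕ, (gam γ (m + i))⁻¹) * gam γ m = ∑' i : ℕ, gam γ m / gam γ (m + i) := by
    rw [mul_comm, ← tsum_mul_left]
    exact tsum_congr fun i => (div_eq_mul_inv _ _).symm
  rw [this]; exact le_Sg hγ hm


lemma lam_zero_eq (γ : ℝ) (z : ℤ) : lam γ 0 z = gam γ z := by simp [lam, gam]

lemma step_eval (hγ : 0 < γ) (hα : 1 < α) (σ : St) (T : ℕ) (hT : 2 ≤ T)
    (h0 : σ.y 0 = α)
    (hpos : ∀ j, 1 ≤ j → j < T → 0 < σ.y j)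
    (hT0 : 0 ≤ σ.y T) (hT1 : σ.y T < 1)
    (hTedge : σ.y T = 0 → σ.y (T - 1) = 1)
    (hzero : ∀ j, T < j → σ.y j = 0)
    (hdelta : ∀ j, 1 ≤ j → j < T → gam γ (j : ℤ) * (1 - σ.y T) / gam γ (T : ℤ) < α - σ.y j) :
    DeltaOf γ 0 α σ = (1 - σ.y T) * γ / gam γ (T : ℤ) ∧
    (step γ 0 α σ).s = σ.s + (1 - σ.y T) * γ / gam γ (T : ℤ) ∧
    ∀ j, (step γ 0 α σ).y j =
      if j ≤ T then σ.y j + (1 - σ.y T) * γ / gam γ (T : ℤ) * gam γ (j : ℤ) / γ else 0 := by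
  have hgT : 0 < gam γ (T : ℤ) := gam_pos hγ (by exact_mod_cast Nat.one_le_iff_ne_zero.2 (by omega))
  have halpha : alphaOf γ 0 α σ = α := by simp [alphaOf]
  have hyltα : ∀ j, 1 ≤ j → j < T → σ.y j < α := by
    intro j h1 h2
    have h := hdelta j h1 h2
    have hnn : 0 ≤ gam γ (j : ℤ) * (1 - σ.y T) / gam γ (T : ℤ) :=
      div_nonneg (mul_nonneg (gam_nonneg hγ (by positivity)) (by linarith)) hgT.le
    linarith
  have hm : mOf γ 0 α σ = 0 := by
    have hset : {j : ℕ | σ.y j = alphaOf γ 0 α σ} = {0} := by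
      ext j
      simp only [Set.mem_setOf_eq, Set.mem_singleton_iff, halpha]
      constructor
      · intro hj
        by_contra hne
        have h1 : 1 ≤ j := Nat.one_le_iff_ne_zero.2 hne
        rcases lt_trichotomy j T with h | h | h
        · exact absurd hj (ne_of_lt (hyltα j h1 h))
        · subst h; linarith
        · rw [hzero j h] at hj; linarith
      · intro hj; subst hj; exact h0
    rw [mOf, hset, csSup_singleton]
  have hkstar : kstarOf σ = T := by
    by_cases hyT : σ.y T = 0
    · have hk : kOf σ = T - 1 := by
        have hset : {j : ℕ | 0 < σ.y j} = Set.Iic (T - 1) := by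
          ext j
          simp only [Set.mem_setOf_eq, Set.mem_Iic]
          constructor
          · intro hj
            by_contra hle
            push_neg at hle
            have hTj : T ≤ j := by omega
            rcases eq_or_lt_of_le hTj with h | h
            · rw [← h, hyT] at hj; exact lt_irrefl 0 hj
            · rw [hzero j h] at hj; exact lt_irrefl 0 hj
          · intro hj
            rcases Nat.eq_zero_or_pos j with h | h
            · subst h; rw [h0]; linarith
            · exact hpos j h (by omega)
        rw [kOf, hset, csSup_Iic]
      have h1 : σ.y (T - 1) = 1 := hTedge hyT
      rw [kstarOf, hk, h1, if_neg (lt_irrefl 1)]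
      omega
    · have hyTpos : 0 < σ.y T := lt_of_le_of_ne hT0 (Ne.symm hyT)
      have hk : kOf σ = T := by
        have hset : {j : ℕ | 0 < σ.y j} = Set.Iic T := by
          ext j
          simp only [Set.mem_setOf_eq, Set.mem_Iic]
          constructor
          · intro hj
            by_contra hle
            push_neg at hle
            rw [hzero j hle] at hj; exact lt_irrefl 0 hj
          · intro hj
            rcases Nat.eq_zero_or_pos j with h | h
            · subst h; rw [h0]; linarith
            · rcases eq_or_lt_of_le hj with h2 | h2
              · rw [h2]; exact hyTpos
              · exact hpos j h h2
        rw [kOf, hset, csSup_Iic]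
      rw [kstarOf, hk, if_pos hT1]
  set Δ := (1 - σ.y T) * γ / gam γ (T : ℤ) with hΔ
  have hΔpos : 0 < Δ := div_pos (mul_pos (by linarith) hγ) hgT
  have hdelT : deltaOf γ 0 α σ T = Δ := by
    simp only [deltaOf, hkstar, if_pos rfl, hm, lam_zero_eq]
    rw [hΔ]
    norm_num
  have hdelJ : ∀ j, 0 < j → j < T → deltaOf γ 0 α σ j = (α - σ.y j) * γ / gam γ (j : ℤ) := by
    intro j h1 h2
    simp only [deltaOf, hkstar, if_neg (show j ≠ T by omega), hm, halpha, lam_zero_eq]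
    norm_num
  have hgeΔ : ∀ x ∈ deltaOf γ 0 α σ '' Set.Ioc (mOf γ 0 α σ) (kstarOf σ), Δ ≤ x := by
    rw [hm, hkstar]
    rintro x ⟨j, ⟨hj1, hj2⟩, rfl⟩
    rcases eq_or_lt_of_le hj2 with h | h
    · rw [h, hdelT]
    · rw [hdelJ j hj1 h]
      have hgj : 0 < gam γ (j : ℤ) := gam_pos hγ (by exact_mod_cast hj1)
      rw [hΔ, div_le_div_iff₀ hgT hgj]
      have h2 := hdelta j hj1 h
      rw [div_lt_iff₀ hgT] at h2
      nlinarith [mul_le_mul_of_nonneg_left h2.le hγ.le]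
  have hmem : Δ ∈ deltaOf γ 0 α σ '' Set.Ioc (mOf γ 0 α σ) (kstarOf σ) := by
    rw [hm, hkstar]
    exact ⟨T, ⟨by omega, le_rfl⟩, hdelT⟩
  have hDelta : DeltaOf γ 0 α σ = Δ := by
    rw [DeltaOf]
    exact le_antisymm (csInf_le ⟨Δ, hgeΔ⟩ hmem) (le_csInf ⟨Δ, hmem⟩ hgeΔ)
  have hstep_y : ∀ j, (step γ 0 α σ).y j =
      if j ≤ T then max (σ.y j + Δ * gam γ (j : ℤ) / γ) 0 else 0 := by
    intro j
    show (if j ≤ kstarOf σ then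
        max (σ.y j + DeltaOf γ 0 α σ * lam γ 0 ((j : ℤ) - (mOf γ 0 α σ : ℤ)) / γ) 0
      else 0) = _
    rw [hkstar, hm, hDelta, lam_zero_eq]
    norm_num
  refine ⟨hDelta, ?_, ?_⟩
  · show σ.s + DeltaOf γ 0 α σ = _
    rw [hDelta]
  · intro j
    rw [hstep_y]
    by_cases hj : j ≤ T
    · rw [if_pos hj, if_pos hj]
      have hyj : 0 ≤ σ.y j := by
        rcases Nat.eq_zero_or_pos j with h | h
        · subst h; rw [h0]; linarith
        · rcases eq_or_lt_of_le hj with h2 | h2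
          · rw [h2]; exact hT0
          · exact (hpos j h h2).le
      have hnn : 0 ≤ Δ * gam γ (j : ℤ) / γ :=
        div_nonneg (mul_nonneg hΔpos.le (gam_nonneg hγ (by positivity))) hγ.le
      rw [max_eq_left (by linarith)]
    · rw [if_neg hj, if_neg hj]

/-- `A = ⌊α⌋` as a natural number. -/
def Aof (α : ℝ) : ℕ := ⌊α⌋.toNat

/-- The explicit increments `Δ_n`. -/
def Dseq (γ α : ℝ) (n : ℕ) : ℝ :=
  if n = 0 then (1 - (α - (Aof α : ℝ))) * γ / gam γ (Aof α : ℤ)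
  else γ / gam γ ((Aof α : ℤ) + (n : ℤ))

/-- The explicit times `s_n`. -/
def sseq (γ α : ℝ) (n : ℕ) : ℝ := ∑ i ∈ Finset.range n, Dseq γ α i

/-- The explicit solution `y_j(s_n)`. -/
def Yf (γ α : ℝ) (n j : ℕ) : ℝ :=
  if j ≤ Aof α then α - (j : ℝ) + gam γ (j : ℤ) * sseq γ α n / γ
  else ∑ l ∈ Finset.Ico (j - Aof α) n, gam γ (j : ℤ) / gam γ ((Aof α : ℤ) + (l : ℤ))

lemma base_facts (hγ : 0 < γ) (hα1 : 1 + 2 * Sg γ < α) :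
    ((Aof α : ℤ) = ⌊α⌋) ∧ 3 ≤ Aof α ∧ ((Aof α : ℝ) ≤ α) ∧ α < (Aof α : ℝ) + 1 ∧
      2 * Sg γ < (Aof α : ℝ) := by
  have hS := one_le_Sg hγ
  have h3 : 3 < α := by linarith
  have hfl : (3 : ℤ) ≤ ⌊α⌋ := Int.le_floor.2 (by push_cast; linarith)
  have hA : ((Aof α : ℤ)) = ⌊α⌋ := Int.toNat_of_nonneg (by omega)
  have hcast : ((Aof α : ℝ)) = ((⌊α⌋ : ℤ) : ℝ) := by rw [← hA]; push_cast; ring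
  have hle : ((Aof α : ℝ)) ≤ α := by rw [hcast]; exact Int.floor_le α
  have hlt : α < (Aof α : ℝ) + 1 := by rw [hcast]; exact Int.lt_floor_add_one α
  exact ⟨hA, by omega, hle, hlt, by linarith⟩

lemma key (hγ : 0 < γ) (hα1 : 1 + 2 * Sg γ < α)
    (hα2 : (1 + γ) ^ ((⌊α⌋ : ℝ) / 2) - 1 < ((1 + γ) ^ ((⌊α⌋ : ℝ)) - 1) / Sg γ)
    (n j : ℕ) (h1 : 1 ≤ j) (hj : j < Aof α + n) :
    gam γ (j : ℤ) / gam γ ((Aof α : ℤ) + (n : ℤ)) < α - Yf γ α n j := by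
  obtain ⟨hA, hA3, hAle, hAlt, hSA⟩ := base_facts hγ hα1
  set A := Aof α with hAdef
  have hS1 := one_le_Sg hγ
  have hSpos : 0 < Sg γ := by linarith
  have hga : 0 < gam γ (A : ℤ) := gam_pos hγ (by omega)
  have hgan : 0 < gam γ ((A : ℤ) + (n : ℤ)) := gam_pos hγ (by omega)
  have hf0 : 0 ≤ α - A := by linarith
  have hf1 : α - A < 1 := by linarith
  -- rewrite hα2 in terms of A
  have hcast : ((⌊α⌋ : ℤ) : ℝ) = (A : ℝ) := by rw [← hA]; push_cast; ring
  rw [hcast] at hα2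
  have hgA_eq : gam γ ((A : ℤ)) = (1 + γ) ^ ((A : ℝ)) - 1 := by
    rw [gam, zpow_natCast, ← Real.rpow_natCast (1 + γ) A]
  rw [← hgA_eq] at hα2
  rw [Yf]
  by_cases hc : j ≤ A
  · rw [if_pos hc]
    -- the sum bound
    have hs1 : sseq γ α n ≤ γ * ∑ i ∈ Finset.range n, (gam γ ((A : ℤ) + (i : ℤ)))⁻¹ := by
      rw [Finset.mul_sum, sseq]
      apply Finset.sum_le_sum
      intro i _
      by_cases hi : i = 0
      · subst hi
        rw [Dseq, if_pos rfl, ← hAdef]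
        simp only [Nat.cast_zero, add_zero]
        rw [← div_eq_mul_inv γ, div_le_div_iff₀ hga hga]
        nlinarith [mul_nonneg (mul_nonneg hf0 hγ.le) hga.le]
      · rw [Dseq, if_neg hi, div_eq_mul_inv]
    have hs2 : ∑ i ∈ Finset.range n, (gam γ ((A : ℤ) + (i : ℤ)))⁻¹ + (gam γ ((A : ℤ) + (n : ℤ)))⁻¹
        = ∑ i ∈ Finset.range (n + 1), (gam γ ((A : ℤ) + (i : ℤ)))⁻¹ :=
      (Finset.sum_range_succ _ n).symm
    have hs3 : ∑ i ∈ Finset.range (n + 1), (gam γ ((A : ℤ) + (i : ℤ)))⁻¹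
        ≤ ∑' i : ℕ, (gam γ ((A : ℤ) + (i : ℤ)))⁻¹ :=
      Summable.sum_le_tsum _ (fun i _ => (inv_nonneg.2 (gam_pos hγ (by omega)).le))
        (summable_inv_gam hγ (by omega))
    have hs4 : ∑' i : ℕ, (gam γ ((A : ℤ) + (i : ℤ)))⁻¹ ≤ Sg γ / gam γ (A : ℤ) :=
      tsum_inv_gam_le hγ (by omega)
    have hsum : sseq γ α n / γ + (gam γ ((A : ℤ) + (n : ℤ)))⁻¹ ≤ Sg γ / gam γ (A : ℤ) := by
      have h6 : sseq γ α n / γ ≤ ∑ i ∈ Finset.range n, (gam γ ((A : ℤ) + (i : ℤ)))⁻¹ := by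
        rw [div_le_iff₀ hγ, mul_comm]
        exact hs1
      linarith
    -- the pointwise bound  gam j * (S/gA) < j
    have hkey2 : gam γ (j : ℤ) * (Sg γ / gam γ (A : ℤ)) < j := by
      by_cases hc2 : (j : ℝ) ≤ (A : ℝ) / 2
      · have hgj_eq : gam γ ((j : ℤ)) = (1 + γ) ^ ((j : ℝ)) - 1 := by
          rw [gam, zpow_natCast, ← Real.rpow_natCast (1 + γ) j]
        have hrle : (1 + γ) ^ ((j : ℝ)) ≤ (1 + γ) ^ ((A : ℝ) / 2) :=
          Real.rpow_le_rpow_of_exponent_le (by linarith) hc2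
        have hlt2 : gam γ (j : ℤ) < gam γ (A : ℤ) / Sg γ := by
          rw [hgj_eq]; linarith
        calc gam γ (j : ℤ) * (Sg γ / gam γ (A : ℤ))
            < gam γ (A : ℤ) / Sg γ * (Sg γ / gam γ (A : ℤ)) :=
              mul_lt_mul_of_pos_right hlt2 (div_pos hSpos hga)
          _ = 1 := by field_simp
          _ ≤ j := by exact_mod_cast h1
      · push_neg at hc2
        have hle2 : gam γ (j : ℤ) ≤ gam γ (A : ℤ) := gam_mono hγ (by omega)
        calc gam γ (j : ℤ) * (Sg γ / gam γ (A : ℤ))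
            ≤ gam γ (A : ℤ) * (Sg γ / gam γ (A : ℤ)) :=
              mul_le_mul_of_nonneg_right hle2 (div_pos hSpos hga).le
          _ = Sg γ := by field_simp
          _ < (A : ℝ) / 2 := by linarith
          _ < j := hc2
    have h5 : gam γ (j : ℤ) * (sseq γ α n / γ + (gam γ ((A : ℤ) + (n : ℤ)))⁻¹) < j :=
      lt_of_le_of_lt (mul_le_mul_of_nonneg_left hsum (gam_nonneg hγ (by omega))) hkey2
    have h6 : gam γ (j : ℤ) / gam γ ((A : ℤ) + (n : ℤ))
        = gam γ (j : ℤ) * (gam γ ((A : ℤ) + (n : ℤ)))⁻¹ := div_eq_mul_inv _ _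
    have h5' : gam γ (j : ℤ) * (sseq γ α n / γ)
        + gam γ (j : ℤ) * (gam γ ((A : ℤ) + (n : ℤ)))⁻¹ < j := by
      rw [← mul_add]; exact h5
    rw [← mul_div_assoc] at h5'
    rw [h6]
    linarith [h5']
  · push_neg at hc
    rw [if_neg (by omega)]
    set i := j - A with hidef
    have hji : j = A + i := by omega
    have hi1 : 1 ≤ i := by omega
    have hin : i < n := by omega
    set m : ℤ := (A : ℤ) + (i : ℤ) with hmdef
    have hm1 : 1 ≤ m := by omega
    have hjm : (j : ℤ) = m := by omega
    have hsum_eq : ∑ l ∈ Finset.Ico i (n + 1), gam γ (j : ℤ) / gam γ ((A : ℤ) + (l : ℤ))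
        = ∑ k ∈ Finset.range (n + 1 - i), gam γ m / gam γ (m + (k : ℤ)) := by
      rw [Finset.sum_Ico_eq_sum_range]
      apply Finset.sum_congr rfl
      intro k _
      rw [hjm]
      congr 1
      push_cast
      rw [hmdef]; ring_nf
    have hle_t : ∑ k ∈ Finset.range (n + 1 - i), gam γ m / gam γ (m + (k : ℤ))
        ≤ ∑' k : ℕ, gam γ m / gam γ (m + (k : ℤ)) :=
      Summable.sum_le_tsum _ (fun k _ => div_nonneg (gam_pos hγ hm1).le (gam_pos hγ (by omega)).le)
        (summable_ratio hγ hm1)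
    have hle_S : ∑' k : ℕ, gam γ m / gam γ (m + (k : ℤ)) ≤ Sg γ := le_Sg hγ hm1
    have htop : ∑ l ∈ Finset.Ico i n, gam γ (j : ℤ) / gam γ ((A : ℤ) + (l : ℤ))
        + gam γ (j : ℤ) / gam γ ((A : ℤ) + (n : ℤ))
        = ∑ l ∈ Finset.Ico i (n + 1), gam γ (j : ℤ) / gam γ ((A : ℤ) + (l : ℤ)) :=
      (Finset.sum_Ico_succ_top (by omega) _).symm
    have : ∑ l ∈ Finset.Ico i n, gam γ (j : ℤ) / gam γ ((A : ℤ) + (l : ℤ))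
        + gam γ (j : ℤ) / gam γ ((A : ℤ) + (n : ℤ)) ≤ Sg γ := by
      rw [htop, hsum_eq]; linarith
    linarith

lemma invariant_zero (hγ : 0 < γ) (hα1 : 1 + 2 * Sg γ < α) :
    (state γ 0 α 0).s = sseq γ α 0 ∧ ∀ j, (state γ 0 α 0).y j = Yf γ α 0 j := by
  obtain ⟨hA, hA3, hAle, hAlt, hSA⟩ := base_facts hγ hα1
  constructor
  · show (0 : ℝ) = _
    simp [sseq]
  · intro j
    show max (α - j) 0 = Yf γ α 0 j
    rw [Yf]
    by_cases hc : j ≤ Aof α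
    · rw [if_pos hc]
      have hjA : (j : ℝ) ≤ (Aof α : ℝ) := by exact_mod_cast hc
      rw [max_eq_left (by linarith)]
      simp [sseq]
    · rw [if_neg hc]
      push_neg at hc
      have hjA : (Aof α : ℝ) + 1 ≤ (j : ℝ) := by exact_mod_cast hc
      rw [max_eq_right (by linarith)]
      rw [Finset.Ico_eq_empty (by omega), Finset.sum_empty]

lemma step_invariant (hγ : 0 < γ) (hα1 : 1 + 2 * Sg γ < α)
    (hα2 : (1 + γ) ^ ((⌊α⌋ : ℝ) / 2) - 1 < ((1 + γ) ^ ((⌊α⌋ : ℝ)) - 1) / Sg γ)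
    (n : ℕ)
    (hs : (state γ 0 α n).s = sseq γ α n) (hy : ∀ j, (state γ 0 α n).y j = Yf γ α n j) :
    DeltaOf γ 0 α (state γ 0 α n) = Dseq γ α n ∧
    (state γ 0 α (n + 1)).s = sseq γ α (n + 1) ∧
    ∀ j, (state γ 0 α (n + 1)).y j = Yf γ α (n + 1) j := by
  obtain ⟨hA, hA3, hAle, hAlt, hSA⟩ := base_facts hγ hα1
  set A := Aof α with hAdef
  have hS1 := one_le_Sg hγ
  have hα : 1 < α := by linarith
  have hga : 0 < gam γ (A : ℤ) := gam_pos hγ (by omega)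
  have hgan : 0 < gam γ ((A : ℤ) + (n : ℤ)) := gam_pos hγ (by omega)
  have hf0 : 0 ≤ α - A := by linarith
  have hf1 : α - A < 1 := by linarith
  have hD0 : 0 < Dseq γ α 0 := by
    rw [Dseq, if_pos rfl, ← hAdef]
    exact div_pos (mul_pos (by linarith) hγ) hga
  have hDpos : ∀ i : ℕ, 0 < Dseq γ α i := by
    intro i
    by_cases hi : i = 0
    · subst hi; exact hD0
    · rw [Dseq, if_neg hi, ← hAdef]
      exact div_pos hγ (gam_pos hγ (by omega))
  have hssnn : ∀ k : ℕ, 0 ≤ sseq γ α k :=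
    fun k => Finset.sum_nonneg fun i _ => (hDpos i).le
  have hsspos : ∀ k : ℕ, 1 ≤ k → 0 < sseq γ α k := fun k hk =>
    Finset.sum_pos (fun i _ => hDpos i) ⟨0, Finset.mem_range.2 (by omega)⟩
  -- the value at the top index
  have hyT : Yf γ α n (A + n) = if n = 0 then α - A else 0 := by
    by_cases hn : n = 0
    · subst hn
      rw [Yf, if_pos (by omega), if_pos rfl]
      simp [sseq]
    · rw [Yf, if_neg (by omega), if_neg hn, ← hAdef, Nat.add_sub_cancel_left,
        Finset.Ico_self, Finset.sum_empty]
  have hT0 : 0 ≤ Yf γ α n (A + n) := by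
    rw [hyT]; split <;> linarith
  have hT1 : Yf γ α n (A + n) < 1 := by
    rw [hyT]; split <;> linarith
  -- hypotheses of step_eval
  set σn := state γ 0 α n with hσdef
  have h0' : σn.y 0 = α := by
    rw [hy 0, Yf, if_pos (by omega)]
    simp [gam_zero]
  have hpos' : ∀ j, 1 ≤ j → j < A + n → 0 < σn.y j := by
    intro j h1 h2
    rw [hy j, Yf]
    by_cases hc : j ≤ A
    · rw [if_pos hc]
      have hterm : 0 ≤ gam γ (j : ℤ) * sseq γ α n / γ :=
        div_nonneg (mul_nonneg (gam_nonneg hγ (by omega)) (hssnn n)) hγ.le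
      by_cases hcA : j < A
      · have : (j : ℝ) + 1 ≤ (A : ℝ) := by exact_mod_cast hcA
        linarith
      · have hjA : j = A := by omega
        have hn1 : 1 ≤ n := by omega
        have hjAr : (j : ℝ) = (A : ℝ) := by exact_mod_cast hjA
        have hterm2 : 0 < gam γ (j : ℤ) * sseq γ α n / γ :=
          div_pos (mul_pos (gam_pos hγ (by omega)) (hsspos n hn1)) hγ
        linarith
    · rw [if_neg hc]
      push_neg at hc
      refine Finset.sum_pos (fun l hl => div_pos (gam_pos hγ (by omega))
        (gam_pos hγ (by omega))) ⟨j - A, Finset.mem_Ico.2 ⟨le_rfl, by omega⟩⟩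
  have hT0' : 0 ≤ σn.y (A + n) := by rw [hy]; exact hT0
  have hT1' : σn.y (A + n) < 1 := by rw [hy]; exact hT1
  have hTedge' : σn.y (A + n) = 0 → σn.y (A + n - 1) = 1 := by
    intro h
    rw [hy] at h ⊢
    by_cases hn : n = 0
    · subst hn
      rw [hyT, if_pos rfl] at h
      rw [Yf, if_pos (by omega)]
      have hcast : ((A - 1 : ℕ) : ℝ) = (A : ℝ) - 1 := by
        have : (1 : ℕ) ≤ A := by omega
        push_cast [this]
        ring
      simp only [Nat.add_zero] at *
      rw [hcast]
      simp only [sseq, Finset.range_zero, Finset.sum_empty, mul_zero, zero_div, add_zero]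
      linarith
    · by_cases hn1 : n = 1
      · subst hn1
        rw [Yf, if_pos (by omega)]
        have hAA : A + 1 - 1 = A := by omega
        rw [hAA]
        have hsseq1 : sseq γ α 1 = (1 - (α - (A : ℝ))) * γ / gam γ (A : ℤ) := by
          rw [sseq, Finset.sum_range_one, Dseq, if_pos rfl, ← hAdef]
        rw [hsseq1]
        field_simp
        ring
      · have hn2 : 2 ≤ n := by omega
        rw [Yf, if_neg (by omega)]
        have he1 : A + n - 1 - A = n - 1 := by omega
        rw [he1]
        have he2 : Finset.Ico (n - 1) n = {n - 1} := by
          have : n = (n - 1) + 1 := by omega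
          rw [this]
          simp [Nat.add_sub_cancel]
        rw [he2, Finset.sum_singleton]
        have hcast2 : ((A + n - 1 : ℕ) : ℤ) = (A : ℤ) + ((n - 1 : ℕ) : ℤ) := by omega
        rw [hcast2]
        exact div_self (gam_pos hγ (by omega)).ne'
  have hzero' : ∀ j, A + n < j → σn.y j = 0 := by
    intro j hj
    rw [hy j, Yf, if_neg (by omega), Finset.Ico_eq_empty (by omega), Finset.sum_empty]
  have hdelta' : ∀ j, 1 ≤ j → j < A + n →
      gam γ (j : ℤ) * (1 - σn.y (A + n)) / gam γ ((A + n : ℕ) : ℤ) < α - σn.y j := by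
    intro j h1 h2
    rw [hy j, hy (A + n)]
    have hK := key hγ hα1 hα2 n j h1 h2
    have hcst : ((A + n : ℕ) : ℤ) = (A : ℤ) + (n : ℤ) := by push_cast; ring
    rw [hcst]
    have h5 : gam γ (j : ℤ) * (1 - Yf γ α n (A + n)) ≤ gam γ (j : ℤ) * 1 :=
      mul_le_mul_of_nonneg_left (by linarith) (gam_nonneg hγ (by omega))
    have h6 : gam γ (j : ℤ) * (1 - Yf γ α n (A + n)) / gam γ ((A : ℤ) + (n : ℤ))
        ≤ gam γ (j : ℤ) * 1 / gam γ ((A : ℤ) + (n : ℤ)) := by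
      apply div_le_div_of_nonneg_right h5 hgan.le
    rw [mul_one] at h6
    linarith
  have hE := step_eval hγ hα σn (A + n) (by omega) h0' hpos' hT0' hT1' hTedge' hzero' hdelta'
  -- identification of the increment
  have hDn : (1 - σn.y (A + n)) * γ / gam γ ((A + n : ℕ) : ℤ) = Dseq γ α n := by
    rw [hy (A + n), hyT]
    by_cases hn : n = 0
    · subst hn
      rw [if_pos rfl, Dseq, if_pos rfl, ← hAdef]
      norm_num
    · rw [if_neg hn, Dseq, if_neg hn, ← hAdef]
      have hcst : ((A + n : ℕ) : ℤ) = (A : ℤ) + (n : ℤ) := by push_cast; ring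
      rw [hcst]
      norm_num
  have hsucc : state γ 0 α (n + 1) = step γ 0 α (state γ 0 α n) := by
    rw [state, state, Function.iterate_succ_apply']
  refine ⟨hE.1.trans hDn, ?_, ?_⟩
  · rw [hsucc, ← hσdef, hE.2.1, hs, hDn]
    conv_rhs => rw [sseq, Finset.sum_range_succ, ← sseq]
  · intro j
    rw [hsucc, ← hσdef, hE.2.2 j]
    by_cases hj : j ≤ A + n
    · rw [if_pos hj, hDn, hy j]
      by_cases hc : j ≤ A
      · rw [Yf, if_pos hc, Yf, if_pos hc]
        conv_rhs => rw [sseq, Finset.sum_range_succ, ← sseq]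
        ring
      · push_neg at hc
        rw [Yf, if_neg (by omega), Yf, if_neg (by omega), ← hAdef,
          Finset.sum_Ico_succ_top (by omega : j - A ≤ n)]
        have hn : n ≠ 0 := by omega
        rw [Dseq, if_neg hn, ← hAdef]
        congr 1
        field_simp
    · rw [if_neg hj, Yf, if_neg (by omega), ← hAdef,
        Finset.Ico_eq_empty (by omega), Finset.sum_empty]

lemma invariant (hγ : 0 < γ) (hα1 : 1 + 2 * Sg γ < α)
    (hα2 : (1 + γ) ^ ((⌊α⌋ : ℝ) / 2) - 1 < ((1 + γ) ^ ((⌊α⌋ : ℝ)) - 1) / Sg γ) :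
    ∀ n, (state γ 0 α n).s = sseq γ α n ∧ ∀ j, (state γ 0 α n).y j = Yf γ α n j := by
  intro n
  induction n with
  | zero => exact invariant_zero hγ hα1
  | succ n ih => exact (step_invariant hγ hα1 hα2 n ih.1 ih.2).2

lemma delta_eq (hγ : 0 < γ) (hα1 : 1 + 2 * Sg γ < α)
    (hα2 : (1 + γ) ^ ((⌊α⌋ : ℝ) / 2) - 1 < ((1 + γ) ^ ((⌊α⌋ : ℝ)) - 1) / Sg γ) (n : ℕ) :
    DeltaOf γ 0 α (state γ 0 α n) = Dseq γ α n :=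
  (step_invariant hγ hα1 hα2 n (invariant hγ hα1 hα2 n).1 (invariant hγ hα1 hα2 n).2).1

lemma main2 (hγ : 0 < γ) (hα1 : 1 + 2 * Sg γ < α)
    (hα2 : (1 + γ) ^ ((⌊α⌋ : ℝ) / 2) - 1 < ((1 + γ) ^ ((⌊α⌋ : ℝ)) - 1) / Sg γ) :
    DeltaOf γ 0 α (state γ 0 α 0) = (1 - (α - (⌊α⌋ : ℝ))) * γ / gam γ ⌊α⌋ ∧
    (∀ n : ℕ, 2 ≤ n →
      DeltaOf γ 0 α (state γ 0 α (n - 1)) ≤ γ / gam γ (⌊α⌋ + (n : ℤ) - 1)) ∧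
    Summable (fun n : ℕ => ((1 + γ) ^ (⌊α⌋ + (n : ℤ)) - 1)⁻¹) ∧
    (∀ N : ℕ, (state γ 0 α N).s ≤ γ * ∑' n : ℕ, ((1 + γ) ^ (⌊α⌋ + (n : ℤ)) - 1)⁻¹) := by
  obtain ⟨hA, hA3, hAle, hAlt, hSA⟩ := base_facts hγ hα1
  have hS1 := one_le_Sg hγ
  have hfl1 : (1 : ℤ) ≤ ⌊α⌋ := by omega
  have hsummable : Summable (fun n : ℕ => (gam γ (⌊α⌋ + (n : ℤ)))⁻¹) :=
    summable_inv_gam hγ hfl1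
  refine ⟨?_, ?_, hsummable, ?_⟩
  · rw [delta_eq hγ hα1 hα2 0, Dseq, if_pos rfl, ← hA]
    push_cast
    ring
  · intro n hn
    rw [delta_eq hγ hα1 hα2 (n - 1), Dseq, if_neg (by omega)]
    have hc : (Aof α : ℤ) + ((n - 1 : ℕ) : ℤ) = ⌊α⌋ + (n : ℤ) - 1 := by omega
    rw [hc]
  · intro N
    rw [(invariant hγ hα1 hα2 N).1, sseq]
    have hga : 0 < gam γ (Aof α : ℤ) := gam_pos hγ (by omega)
    have hbound : ∀ i ∈ Finset.range N, Dseq γ α i ≤ γ * (gam γ ((Aof α : ℤ) + (i : ℤ)))⁻¹ := by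
      intro i _
      by_cases hi : i = 0
      · subst hi
        rw [Dseq, if_pos rfl]
        simp only [Nat.cast_zero, add_zero]
        rw [← div_eq_mul_inv γ, div_le_div_iff₀ hga hga]
        nlinarith [mul_nonneg (mul_nonneg (show 0 ≤ α - (Aof α : ℝ) by linarith) hγ.le) hga.le]
      · rw [Dseq, if_neg hi, div_eq_mul_inv]
    have hsum2 : ∑ i ∈ Finset.range N, Dseq γ α i
        ≤ γ * ∑ i ∈ Finset.range N, (gam γ ((Aof α : ℤ) + (i : ℤ)))⁻¹ := by
      rw [Finset.mul_sum]
      exact Finset.sum_le_sum hbound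
    have hsummable2 : Summable (fun i : ℕ => (gam γ ((Aof α : ℤ) + (i : ℤ)))⁻¹) :=
      summable_inv_gam hγ (by omega)
    have hsum3 : ∑ i ∈ Finset.range N, (gam γ ((Aof α : ℤ) + (i : ℤ)))⁻¹
        ≤ ∑' i : ℕ, (gam γ ((Aof α : ℤ) + (i : ℤ)))⁻¹ :=
      Summable.sum_le_tsum _ (fun i _ => inv_nonneg.2 (gam_pos hγ (by omega)).le) hsummable2
    have : γ * ∑ i ∈ Finset.range N, (gam γ ((Aof α : ℤ) + (i : ℤ)))⁻¹
        ≤ γ * ∑' i : ℕ, (gam γ ((Aof α : ℤ) + (i : ℤ)))⁻¹ :=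
      mul_le_mul_of_nonneg_left hsum3 hγ.le
    have hfinal : ∑ i ∈ Finset.range N, Dseq γ α i
        ≤ γ * ∑' i : ℕ, (gam γ ((Aof α : ℤ) + (i : ℤ)))⁻¹ := le_trans hsum2 this
    have hre : (∑' i : ℕ, (gam γ ((Aof α : ℤ) + (i : ℤ)))⁻¹)
        = ∑' n : ℕ, ((1 + γ) ^ (⌊α⌋ + (n : ℤ)) - 1)⁻¹ := by
      rw [hA]; rfl
    rwa [hre] at hfinal

lemma blowup_aux (γ : ℝ) (hγ : 0 < γ) :
    (∃ αγ : ℝ, 1 ≤ αγ ∧ ∀ α : ℝ, αγ < α →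
      BddAbove (Set.range fun n : ℕ => (state γ 0 α n).s)) ∧
    (∀ α : ℝ, 1 + 2 * Sg γ < α →
      (1 + γ) ^ ((⌊α⌋ : ℝ) / 2) - 1 < ((1 + γ) ^ ((⌊α⌋ : ℝ)) - 1) / Sg γ →
      DeltaOf γ 0 α (state γ 0 α 0) = (1 - (α - (⌊α⌋ : ℝ))) * γ / gam γ ⌊α⌋ ∧
      (∀ n : ℕ, 2 ≤ n →
        DeltaOf γ 0 α (state γ 0 α (n - 1)) ≤ γ / gam γ (⌊α⌋ + (n : ℤ) - 1)) ∧
      Summable (fun n : ℕ => ((1 + γ) ^ (⌊α⌋ + (n : ℤ)) - 1)⁻¹) ∧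
      (∀ N : ℕ, (state γ 0 α N).s ≤ γ * ∑' n : ℕ, ((1 + γ) ^ (⌊α⌋ + (n : ℤ)) - 1)⁻¹)) := by
  have hS1 := one_le_Sg hγ
  have hlogpos : 0 < Real.log (1 + γ) := Real.log_pos (one_lt_base hγ)
  constructor
  · refine ⟨max (1 + 2 * Sg γ) (2 * Real.log (Sg γ + 1) / Real.log (1 + γ) + 1), ?_, ?_⟩
    · exact le_trans (by linarith) (le_max_left _ _)
    · intro α hα
      have hα1 : 1 + 2 * Sg γ < α := lt_of_le_of_lt (le_max_left _ _) hα
      have hα2 : (1 + γ) ^ ((⌊α⌋ : ℝ) / 2) - 1 < ((1 + γ) ^ ((⌊α⌋ : ℝ)) - 1) / Sg γ := by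
        have hfl : α - 1 < (⌊α⌋ : ℝ) := Int.sub_one_lt_floor α
        have hlog2 : 2 * Real.log (Sg γ + 1) / Real.log (1 + γ) + 1 < α :=
          lt_of_le_of_lt (le_max_right _ _) hα
        have hlog3 : 2 * Real.log (Sg γ + 1) < (⌊α⌋ : ℝ) * Real.log (1 + γ) := by
          have h := (div_lt_iff₀ hlogpos).1 (show 2 * Real.log (Sg γ + 1) / Real.log (1 + γ)
            < (⌊α⌋ : ℝ) by linarith)
          linarith
        have hlog4 : Real.log (Sg γ + 1) < ((⌊α⌋ : ℝ) / 2) * Real.log (1 + γ) := by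
          linarith
        have hxgt : Sg γ + 1 < (1 + γ) ^ ((⌊α⌋ : ℝ) / 2) :=
          (Real.lt_rpow_iff_log_lt (by linarith) (base_pos hγ)).2 hlog4
        have hx2 : (1 + γ) ^ ((⌊α⌋ : ℝ)) = ((1 + γ) ^ ((⌊α⌋ : ℝ) / 2)) ^ 2 := by
          rw [← Real.rpow_natCast ((1 + γ) ^ ((⌊α⌋ : ℝ) / 2)) 2,
            ← Real.rpow_mul (base_pos hγ).le]
          congr 1
          push_cast
          ring
        rw [hx2, lt_div_iff₀ (by linarith : (0 : ℝ) < Sg γ)]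
        nlinarith [mul_pos (show (0:ℝ) < (1 + γ) ^ ((⌊α⌋ : ℝ) / 2) - 1 by linarith)
          (show (0:ℝ) < (1 + γ) ^ ((⌊α⌋ : ℝ) / 2) + 1 - Sg γ by linarith)]
      obtain ⟨-, -, hsum, hbd⟩ := main2 hγ hα1 hα2
      exact ⟨γ * ∑' n : ℕ, ((1 + γ) ^ (⌊α⌋ + (n : ℤ)) - 1)⁻¹,
        by rintro x ⟨N, rfl⟩; exact hbd N⟩
  · intro α hα1 hα2
    exact main2 hγ hα1 hα2

/-- Blow-up in finite time, `ρ = 0`.  For every `γ > 0` there is an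
`α_γ ≥ 1` such that `t* < ∞` whenever `α > α_γ`.  More precisely, if `α > 1 + 2 S(γ)` and
`(1+γ)^{⌊α⌋/2} − 1 < ((1+γ)^{⌊α⌋} − 1)/S(γ)`, then (writing `a = ⌊α⌋`, and with the paper's
indexing `Δ_1, Δ_2, …` for the successive increments, so that `Δ_n = s_n − s_{n−1}`)
`Δ_1 = (1 − (α − a))·γ/γ_a`, `Δ_n ≤ γ/γ_{a+n−1}` for all `n ≥ 2`, and hence
`t* ≤ γ·Σ_{n=0}^∞ ((1+γ)^{a+n} − 1)⁻¹ < ∞`. -/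
theorem blowup_in_finite_time (γ : ℝ) (hγ : 0 < γ) :
    (∃ αγ : ℝ, 1 ≤ αγ ∧ ∀ α : ℝ, αγ < α →
      BddAbove (Set.range fun n : ℕ => (state γ 0 α n).s)) ∧
    (∀ α : ℝ, 1 + 2 * Sg γ < α →
      (1 + γ) ^ ((⌊α⌋ : ℝ) / 2) - 1 < ((1 + γ) ^ ((⌊α⌋ : ℝ)) - 1) / Sg γ →
      DeltaOf γ 0 α (state γ 0 α 0) = (1 - (α - (⌊α⌋ : ℝ))) * γ / gam γ ⌊α⌋ ∧
      (∀ n : ℕ, 2 ≤ n →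
        DeltaOf γ 0 α (state γ 0 α (n - 1)) ≤ γ / gam γ (⌊α⌋ + (n : ℤ) - 1)) ∧
      Summable (fun n : ℕ => ((1 + γ) ^ (⌊α⌋ + (n : ℤ)) - 1)⁻¹) ∧
      (∀ N : ℕ, (state γ 0 α N).s ≤ γ * ∑' n : ℕ, ((1 + γ) ^ (⌊α⌋ + (n : ℤ)) - 1)⁻¹)) :=
  blowup_aux γ hγ

end

end SelectiveSweeps
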